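/- In the ℓ₁-ℓ₁ setup, the 'sampling from the difference' gradient estimator is (w₀, ‖A‖_max)-centered. Concretely: let A ∈ ℝ^{m×n}, w₀ = (x₀, y₀) and w = (x, y) in Δⁿ × Δᵐ, and sample i ∈ [m] with probability p_i = |y_i − (y₀)_i|/‖y − y₀‖₁ and independently j ∈ [n] with probability q_j = |x_j − (x₀)_j|/‖x − x₀‖₁. Set g̃(w) = (Aᵀy₀ + A_{i:}·‖y−y₀‖₁·sign(y_i − (y₀)_i), −Ax₀ − A_{:j}·‖x−x₀‖₁·sign(x_j − (x₀)_j)). Then E[g̃(w)] = (Aᵀy, −Ax), and with probability 1, ‖g̃(w) − (Aᵀy₀, −Ax₀)‖*² ≤ ‖A‖_max²(‖x − x₀‖₁² + ‖y − y₀‖₁²), where ‖(gˣ, gʸ)‖*² = ‖gˣ‖_∞² + ‖gʸ‖_∞². -/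

import Mathlib

noncomputable def l1norm {d : ℕ} (v : Fin d → ℝ) : ℝ := ∑ i, |v i|

noncomputable def linfnorm {d : ℕ} (v : Fin d → ℝ) : ℝ := ⨆ i, |v i|

lemma sign_mul_abs' (r : ℝ) : Real.sign r * |r| = r := by
  rcases lt_trichotomy r 0 with h | h | h
  · rw [Real.sign_of_neg h, abs_of_neg h]; ring
  · simp [h]
  · rw [Real.sign_of_pos h, abs_of_pos h]; ring

/-- the "sampling from the difference" estimator for ℓ₁-ℓ₁ games
is `(w₀, ‖A‖_max)`-centered: it is unbiased for `(Aᵀy, −Ax)`, and with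
probability 1 (i.e. for every sampled pair `(i,j)`) the squared dual-norm
deviation from `(Aᵀy₀, −Ax₀)` is at most `‖A‖_max² (‖x−x₀‖₁² + ‖y−y₀‖₁²)`. -/
theorem l1_l1_estimator_centered {m n : ℕ}
    (A : Matrix (Fin m) (Fin n) ℝ)
    (x x₀ : Fin n → ℝ) (y y₀ : Fin m → ℝ)
    (hx : (∀ j, 0 ≤ x j) ∧ ∑ j, x j = 1)
    (hx₀ : (∀ j, 0 ≤ x₀ j) ∧ ∑ j, x₀ j = 1)
    (hy : (∀ i, 0 ≤ y i) ∧ ∑ i, y i = 1)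
    (hy₀ : (∀ i, 0 ≤ y₀ i) ∧ ∑ i, y₀ i = 1)
    (hxne : x ≠ x₀) (hyne : y ≠ y₀)
    (p : Fin m → ℝ) (hp : ∀ i, p i = |y i - y₀ i| / l1norm (y - y₀))
    (q : Fin n → ℝ) (hq : ∀ j, q j = |x j - x₀ j| / l1norm (x - x₀))
    (Gx : Fin m → Fin n → ℝ) (Gy : Fin n → Fin m → ℝ)
    (hGx : ∀ i, Gx i =
      (fun k => ∑ i', A i' k * y₀ i') +
        (l1norm (y - y₀) * Real.sign (y i - y₀ i)) • A i)
    (hGy : ∀ j, Gy j =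
      (fun i => -∑ j', A i j' * x₀ j') -
        (l1norm (x - x₀) * Real.sign (x j - x₀ j)) • (fun i => A i j)) :
    (∑ i, p i • Gx i = fun k => ∑ i', A i' k * y i') ∧
    (∑ j, q j • Gy j = fun i => -∑ j', A i j' * x j') ∧
    (∀ i j,
      linfnorm (Gx i - fun k => ∑ i', A i' k * y₀ i') ^ 2 +
        linfnorm (Gy j - fun i' => -∑ j', A i' j' * x₀ j') ^ 2 ≤
      (⨆ ij : Fin m × Fin n, |A ij.1 ij.2|) ^ 2 *
        (l1norm (x - x₀) ^ 2 + l1norm (y - y₀) ^ 2)) := by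
  -- positivity of the ℓ₁ distances
  have hLy : 0 < l1norm (y - y₀) := by
    obtain ⟨i, hi⟩ := Function.ne_iff.mp hyne
    exact Finset.sum_pos' (fun i _ => abs_nonneg _)
      ⟨i, Finset.mem_univ i, by simpa [sub_ne_zero] using abs_pos.mpr (sub_ne_zero.mpr hi)⟩
  have hLx : 0 < l1norm (x - x₀) := by
    obtain ⟨j, hj⟩ := Function.ne_iff.mp hxne
    exact Finset.sum_pos' (fun j _ => abs_nonneg _)
      ⟨j, Finset.mem_univ j, by simpa [sub_ne_zero] using abs_pos.mpr (sub_ne_zero.mpr hj)⟩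
  set Ly := l1norm (y - y₀) with hLydef
  set Lx := l1norm (x - x₀) with hLxdef
  have hpsum : ∑ i, p i = 1 := by
    have : ∑ i, p i = (∑ i, |y i - y₀ i|) / Ly := by
      rw [Finset.sum_div]; exact Finset.sum_congr rfl fun i _ => hp i
    rw [this, show (∑ i, |y i - y₀ i|) = Ly from by
      simp [hLydef, l1norm, Pi.sub_apply], div_self hLy.ne']
  have hqsum : ∑ j, q j = 1 := by
    have : ∑ j, q j = (∑ j, |x j - x₀ j|) / Lx := by
      rw [Finset.sum_div]; exact Finset.sum_congr rfl fun j _ => hq j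
    rw [this, show (∑ j, |x j - x₀ j|) = Lx from by
      simp [hLxdef, l1norm, Pi.sub_apply], div_self hLx.ne']
  have keyp : ∀ i, p i * (Ly * Real.sign (y i - y₀ i)) = y i - y₀ i := by
    intro i
    rw [hp i]
    field_simp
    linear_combination sign_mul_abs' (y i - y₀ i)
  have keyq : ∀ j, q j * (Lx * Real.sign (x j - x₀ j)) = x j - x₀ j := by
    intro j
    rw [hq j]
    field_simp
    linear_combination sign_mul_abs' (x j - x₀ j)
  refine ⟨?_, ?_, ?_⟩
  · funext k
    simp only [Finset.sum_apply, Pi.smul_apply, hGx, Pi.add_apply, smul_eq_mul]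
    have step : ∀ i ∈ Finset.univ,
        p i * ((∑ i', A i' k * y₀ i') + Ly * Real.sign (y i - y₀ i) * A i k)
          = p i * (∑ i', A i' k * y₀ i') + (y i - y₀ i) * A i k := by
      intro i _
      rw [mul_add, ← mul_assoc, keyp i]
    rw [Finset.sum_congr rfl step, Finset.sum_add_distrib, ← Finset.sum_mul, hpsum, one_mul]
    have e1 : (∑ i', A i' k * y₀ i') = ∑ i, y₀ i * A i k :=
      Finset.sum_congr rfl fun i _ => mul_comm _ _
    have e2 : (∑ i', A i' k * y i') = ∑ i, y i * A i k :=
      Finset.sum_congr rfl fun i _ => mul_comm _ _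
    rw [e1, e2]
    simp only [sub_mul]
    rw [Finset.sum_sub_distrib]
    ring
  · funext i
    simp only [Finset.sum_apply, Pi.smul_apply, hGy, Pi.sub_apply, smul_eq_mul]
    have step : ∀ j ∈ Finset.univ,
        q j * ((-∑ j', A i j' * x₀ j') - Lx * Real.sign (x j - x₀ j) * A i j)
          = q j * (-∑ j', A i j' * x₀ j') - (x j - x₀ j) * A i j := by
      intro j _
      rw [mul_sub, ← mul_assoc, keyq j]
    rw [Finset.sum_congr rfl step, Finset.sum_sub_distrib, ← Finset.sum_mul, hqsum, one_mul]
    have e1 : (∑ j', A i j' * x₀ j') = ∑ j, x₀ j * A i j :=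
      Finset.sum_congr rfl fun j _ => mul_comm _ _
    have e2 : (∑ j', A i j' * x j') = ∑ j, x j * A i j :=
      Finset.sum_congr rfl fun j _ => mul_comm _ _
    rw [e1, e2]
    simp only [sub_mul]
    rw [Finset.sum_sub_distrib]
    ring
  · intro i j
    have hm : Nonempty (Fin m) := by
      rcases Nat.eq_zero_or_pos m with h | h
      · subst h; simpa using hy.2
      · exact Fin.pos_iff_nonempty.mp h
    have hn : Nonempty (Fin n) := by
      rcases Nat.eq_zero_or_pos n with h | h
      · subst h; simpa using hx.2
      · exact Fin.pos_iff_nonempty.mp h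
    set M := ⨆ ij : Fin m × Fin n, |A ij.1 ij.2| with hM
    have hMb : ∀ a b, |A a b| ≤ M :=
      fun a b => le_ciSup (f := fun ij : Fin m × Fin n => |A ij.1 ij.2|)
        (Set.Finite.bddAbove (Set.finite_range _)) (a, b)
    have hM0 : 0 ≤ M := le_trans (abs_nonneg _) (hMb hm.some hn.some)
    have hsign : ∀ r : ℝ, |Real.sign r| ≤ 1 := by
      intro r
      rcases Real.sign_apply_eq r with h | h | h <;> rw [h] <;> norm_num
    -- bound the first term
    have h1 : linfnorm (Gx i - fun k => ∑ i', A i' k * y₀ i') ≤ Ly * M := by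
      have : (Gx i - fun k => ∑ i', A i' k * y₀ i')
          = (Ly * Real.sign (y i - y₀ i)) • A i := by
        rw [hGx i]; abel
      rw [this, linfnorm]
      refine ciSup_le fun k => ?_
      have : |(Ly * Real.sign (y i - y₀ i)) • A i k| =
          Ly * |Real.sign (y i - y₀ i)| * |A i k| := by
        rw [smul_eq_mul, abs_mul, abs_mul, abs_of_pos hLy]
      rw [Pi.smul_apply, this]
      calc Ly * |Real.sign (y i - y₀ i)| * |A i k| ≤ Ly * 1 * M := by
              gcongr
              · exact hsign _
              · exact hMb i k
        _ = Ly * M := by ring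
    have h2 : linfnorm (Gy j - fun i' => -∑ j', A i' j' * x₀ j') ≤ Lx * M := by
      have : (Gy j - fun i' => -∑ j', A i' j' * x₀ j')
          = -((Lx * Real.sign (x j - x₀ j)) • (fun i' => A i' j)) := by
        rw [hGy j]; abel
      rw [this, linfnorm]
      refine ciSup_le fun k => ?_
      have : |(-((Lx * Real.sign (x j - x₀ j)) • fun i' => A i' j)) k| =
          Lx * |Real.sign (x j - x₀ j)| * |A k j| := by
        simp only [Pi.neg_apply, Pi.smul_apply, smul_eq_mul, abs_neg, abs_mul,
          abs_of_pos hLx]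
      rw [this]
      calc Lx * |Real.sign (x j - x₀ j)| * |A k j| ≤ Lx * 1 * M := by
              gcongr
              · exact hsign _
              · exact hMb k j
        _ = Lx * M := by ring
    have g1 : 0 ≤ linfnorm (Gx i - fun k => ∑ i', A i' k * y₀ i') :=
      Real.iSup_nonneg fun _ => abs_nonneg _
    have g2 : 0 ≤ linfnorm (Gy j - fun i' => -∑ j', A i' j' * x₀ j') :=
      Real.iSup_nonneg fun _ => abs_nonneg _
    nlinarith [pow_le_pow_left₀ g1 h1 2, pow_le_pow_left₀ g2 h2 2]
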